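/- For |q| < 1 and any z ∈ ℂ, we have (z;q)_∞ = Σ_{j≥0} (-1)^j q^{j(j-1)/2} z^j / (q;q)_j. -/

import Mathlib

open Filter Finset Complex Topology

noncomputable def qPoch (z q : ℂ) (n : ℕ) : ℂ := ∏ i ∈ Finset.range n, (1 - z * q ^ i)

noncomputable def qb (q : ℂ) : ℕ → ℕ → ℂ
  | _, 0 => 1
  | 0, _ + 1 => 0
  | n + 1, j + 1 => qb q n (j + 1) + q ^ (n - j) * qb q n j

lemma qb_zero_right (q : ℂ) (n : ℕ) : qb q n 0 = 1 := by cases n <;> rfl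

lemma qb_of_lt (q : ℂ) : ∀ {n j : ℕ}, n < j → qb q n j = 0 := by
  intro n
  induction n with
  | zero => intro j hj; match j, hj with | j+1, _ => rfl
  | succ n ih =>
    intro j hj
    match j, hj with
    | j+1, hj =>
      show qb q n (j+1) + q ^ (n - j) * qb q n j = 0
      rw [ih (by omega), ih (by omega), mul_zero, add_zero]

lemma half_sq (k : ℕ) : (k + 1) * k / 2 = k * (k - 1) / 2 + k := by
  have h : (k + 1) * k = k * (k - 1) + 2 * k := by
    cases k with
    | zero => rfl
    | succ m => simp [Nat.succ_sub_one]; ring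
  rw [h, Nat.add_mul_div_left _ _ (by norm_num)]

/-- Finite q-binomial theorem. -/
lemma qPoch_eq_sum (z q : ℂ) (n : ℕ) :
    qPoch z q n = ∑ j ∈ Finset.range (n + 1),
      (-1) ^ j * q ^ (j * (j - 1) / 2) * z ^ j * qb q n j := by
  induction n with
  | zero => simp [qPoch, qb]
  | succ n ih =>
    have hstep : qPoch z q (n + 1) = qPoch z q n * (1 - z * q ^ n) :=
      Finset.prod_range_succ _ _
    rw [hstep, ih]
    set t : ℕ → ℂ := fun j => (-1) ^ j * q ^ (j * (j - 1) / 2) * z ^ j with ht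
    have key : ∀ j, qb q (n+1) (j+1) = qb q n (j+1) + q ^ (n - j) * qb q n j :=
      fun j => rfl
    have expand : ∑ j ∈ Finset.range (n+2), t j * qb q (n+1) j
        = (∑ j ∈ Finset.range (n+1), t (j+1) * qb q n (j+1) + t 0 * qb q (n+1) 0)
          + ∑ j ∈ Finset.range (n+1), t (j+1) * (q ^ (n-j) * qb q n j) := by
      rw [Finset.sum_range_succ' (fun j => t j * qb q (n+1) j)]
      simp only [key, mul_add]
      rw [Finset.sum_add_distrib]
      ring
    have hA : ∑ j ∈ Finset.range (n+1), t (j+1) * qb q n (j+1) + t 0 * qb q (n+1) 0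
        = ∑ j ∈ Finset.range (n+1), t j * qb q n j := by
      rw [qb_zero_right, ← qb_zero_right q n,
        ← Finset.sum_range_succ' (fun j => t j * qb q n j),
        Finset.sum_range_succ (fun j => t j * qb q n j),
        qb_of_lt q (Nat.lt_succ_self n), mul_zero, add_zero]
    have hB : ∑ j ∈ Finset.range (n+1), t (j+1) * (q ^ (n-j) * qb q n j)
        = -(z * q ^ n) * ∑ j ∈ Finset.range (n+1), t j * qb q n j := by
      rw [Finset.mul_sum]
      apply Finset.sum_congr rfl
      intro j hj
      have hjn : j ≤ n := by simpa [Nat.lt_succ_iff] using hj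
      have hpow : q ^ ((j+1) * j / 2) * q ^ (n-j) = q ^ (j * (j-1) / 2) * q ^ n := by
        rw [← pow_add, ← pow_add, half_sq]
        congr 1
        omega
      have htj1 : t (j+1) = (-1) ^ (j+1) * q ^ ((j+1) * j / 2) * z ^ (j+1) := by
        simp [ht]
      calc t (j+1) * (q ^ (n-j) * qb q n j)
          = ((-1) ^ (j+1) * z ^ (j+1)) * (q ^ ((j+1) * j / 2) * q ^ (n-j)) * qb q n j := by
            rw [htj1]; ring
        _ = ((-1) ^ (j+1) * z ^ (j+1)) * (q ^ (j * (j-1) / 2) * q ^ n) * qb q n j := by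
            rw [hpow]
        _ = -(z * q ^ n) * (t j * qb q n j) := by simp only [ht, pow_succ]; ring
    show (∑ j ∈ Finset.range (n+1), t j * qb q n j) * (1 - z * q ^ n)
        = ∑ j ∈ Finset.range (n+2), t j * qb q (n+1) j
    rw [expand, hA, hB]
    ring

lemma qb_diag (q : ℂ) : ∀ n : ℕ, qb q n n = 1 := by
  intro n
  induction n with
  | zero => rfl
  | succ n ih =>
    show qb q n (n+1) + q ^ (n - n) * qb q n n = 1
    rw [qb_of_lt q (Nat.lt_succ_self n), ih, Nat.sub_self, pow_zero, one_mul, zero_add]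

lemma qb_mul (q : ℂ) : ∀ n : ℕ, ∀ j, j ≤ n →
    qb q n j * (qPoch q q j * qPoch q q (n - j)) = qPoch q q n := by
  intro n
  induction n with
  | zero =>
    intro j hj
    interval_cases j
    simp [qPoch, qb_zero_right]
  | succ n ih =>
    intro j hj
    have hQsucc : ∀ m, qPoch q q (m+1) = qPoch q q m * (1 - q * q ^ m) :=
      fun m => Finset.prod_range_succ _ _
    match j with
    | 0 =>
      have : qPoch q q 0 = 1 := rfl
      rw [qb_zero_right, this, Nat.sub_zero, one_mul, one_mul]
    | j+1 =>
      have hjn : j ≤ n := by omega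
      show (qb q n (j+1) + q ^ (n-j) * qb q n j) *
        (qPoch q q (j+1) * qPoch q q (n+1-(j+1))) = qPoch q q (n+1)
      rcases eq_or_lt_of_le hjn with rfl | hlt
      · simp only [qb_of_lt q (Nat.lt_succ_self j), qb_diag, Nat.sub_self,
          show qPoch q q 0 = 1 from rfl]
        ring
      · set k := n - (j+1) with hk
        have e1 : n + 1 - (j+1) = k + 1 := by omega
        have e2 : n - j = k + 1 := by omega
        have h1 := ih (j+1) hlt
        have h2 := ih j hjn
        rw [← hk] at h1
        rw [e2] at h2
        rw [hQsucc k] at h2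
        rw [e1]
        rw [e2]
        rw [hQsucc k]
        rw [hQsucc n]
        rw [hQsucc j]
        rw [show (q:ℂ)^n = q^(k+1) * q^j from by rw [← pow_add]; congr 1; omega]
        linear_combination (1 - q * q ^ k) * h1 + (q ^ (k+1) * (1 - q * q ^ j)) * h2 + (qb q n (j+1) * qPoch q q k * (q * q ^ k - 1)) * hQsucc j

lemma exp_le_one_sub {x r : ℝ} (hx : 0 ≤ x) (hxr : x ≤ r) (hr : r < 1) :
    Real.exp (-(x / (1 - r))) ≤ 1 - x := by
  have h1r : (0:ℝ) < 1 - r := by linarith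
  set t := x / (1 - r) with ht
  have ht0 : 0 ≤ t := div_nonneg hx h1r.le
  have h1 : t + 1 ≤ Real.exp t := Real.add_one_le_exp t
  have h2 : Real.exp (-t) = (Real.exp t)⁻¹ := Real.exp_neg t
  rw [h2]
  have h3 : (Real.exp t)⁻¹ ≤ (t + 1)⁻¹ := by
    apply inv_anti₀ (by linarith) h1
  refine h3.trans ?_
  rw [inv_le_iff_one_le_mul₀ (by linarith)]
  have key : (1 - x) * (t + 1) - 1 = x * (r - x) / (1 - r) := by
    field_simp [ht]
    linear_combination (1 - x) * inv_mul_cancel_right₀ h1r.ne' x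
  nlinarith [mul_nonneg (mul_nonneg hx (by linarith : (0:ℝ) ≤ r - x)) (le_of_lt (inv_pos.mpr h1r)),
    div_nonneg (mul_nonneg hx (by linarith : (0:ℝ) ≤ r - x)) h1r.le]

lemma geom_tail_le {r : ℝ} (hr0 : 0 ≤ r) (hr : r < 1) (n : ℕ) :
    ∑ i ∈ Finset.range n, r ^ (i + 1) ≤ r / (1 - r) := by
  have h1r : (0:ℝ) < 1 - r := by linarith
  have : ∑ i ∈ Finset.range n, r ^ (i + 1) = r * ∑ i ∈ Finset.range n, r ^ i := by
    rw [Finset.mul_sum]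
    exact Finset.sum_congr rfl fun i _ => by rw [pow_succ']
  rw [this, div_eq_mul_inv]
  apply mul_le_mul_of_nonneg_left _ hr0
  calc ∑ i ∈ Finset.range n, r ^ i ≤ ∑' i : ℕ, r ^ i :=
        Summable.sum_le_tsum _ (fun i _ => pow_nonneg hr0 i) (summable_geometric_of_lt_one hr0 hr)
    _ = (1 - r)⁻¹ := tsum_geometric_of_lt_one hr0 hr

lemma norm_qPoch_le (q : ℂ) (hq : ‖q‖ < 1) (n : ℕ) :
    ‖qPoch q q n‖ ≤ Real.exp (‖q‖ / (1 - ‖q‖)) := by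
  set r := ‖q‖ with hr
  have hr0 : 0 ≤ r := norm_nonneg q
  calc ‖qPoch q q n‖ = ∏ i ∈ Finset.range n, ‖(1:ℂ) - q * q ^ i‖ := by
        rw [qPoch, norm_prod]
    _ ≤ ∏ i ∈ Finset.range n, Real.exp (r ^ (i + 1)) := by
        apply Finset.prod_le_prod (fun i _ => norm_nonneg _)
        intro i _
        calc ‖(1:ℂ) - q * q ^ i‖ ≤ ‖(1:ℂ)‖ + ‖q * q ^ i‖ := norm_sub_le _ _
          _ = 1 + r ^ (i + 1) := by
              rw [norm_one, norm_mul, norm_pow, ← hr, pow_succ']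
          _ ≤ Real.exp (r ^ (i + 1)) := by
              have := Real.add_one_le_exp (r ^ (i + 1)); linarith
    _ = Real.exp (∑ i ∈ Finset.range n, r ^ (i + 1)) := (Real.exp_sum _ _).symm
    _ ≤ Real.exp (r / (1 - r)) := Real.exp_le_exp.mpr (geom_tail_le hr0 hq n)

lemma le_norm_qPoch (q : ℂ) (hq : ‖q‖ < 1) (n : ℕ) :
    Real.exp (-(‖q‖ / ((1 - ‖q‖) * (1 - ‖q‖)))) ≤ ‖qPoch q q n‖ := by
  set r := ‖q‖ with hr
  have hr0 : 0 ≤ r := norm_nonneg q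
  have h1r : (0:ℝ) < 1 - r := by linarith
  calc Real.exp (-(r / ((1 - r) * (1 - r))))
      ≤ Real.exp (∑ i ∈ Finset.range n, -(r ^ (i + 1) / (1 - r))) := by
        apply Real.exp_le_exp.mpr
        rw [Finset.sum_neg_distrib, ← Finset.sum_div, ← div_div]
        apply neg_le_neg
        gcongr
        exact geom_tail_le hr0 hq n
    _ = ∏ i ∈ Finset.range n, Real.exp (-(r ^ (i + 1) / (1 - r))) := Real.exp_sum _ _
    _ ≤ ∏ i ∈ Finset.range n, ‖(1:ℂ) - q * q ^ i‖ := by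
        apply Finset.prod_le_prod (fun i _ => (Real.exp_pos _).le)
        intro i _
        have hle : r ^ (i + 1) ≤ r := by
          calc r ^ (i + 1) ≤ r ^ 1 := pow_le_pow_of_le_one hr0 hq.le (by omega)
            _ = r := pow_one r
        calc Real.exp (-(r ^ (i + 1) / (1 - r))) ≤ 1 - r ^ (i + 1) :=
              exp_le_one_sub (pow_nonneg hr0 _) hle hq
          _ = ‖(1:ℂ)‖ - ‖q * q ^ i‖ := by
              rw [norm_one, norm_mul, norm_pow, ← hr, pow_succ']
          _ ≤ ‖(1:ℂ) - q * q ^ i‖ := norm_sub_norm_le _ _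
    _ = ‖qPoch q q n‖ := by rw [qPoch, norm_prod]

lemma multipliable_aux (z q : ℂ) (hq : ‖q‖ < 1)
    (hne : ∀ l : ℕ, (1:ℂ) - z * q ^ l ≠ 0) :
    Multipliable (fun l : ℕ => 1 - z * q ^ l) := by
  apply Complex.multipliable_of_summable_log
  have htend : Tendsto (fun l : ℕ => ‖z * q ^ l‖) atTop (𝓝 0) := by
    simp only [norm_mul, norm_pow]
    rw [show (0:ℝ) = ‖z‖ * 0 by ring]
    exact (tendsto_pow_atTop_nhds_zero_of_lt_one (norm_nonneg q) hq).const_mul _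
  apply Summable.of_norm_bounded_eventually_nat (g := fun l => 3/2 * ‖z * q ^ l‖)
  · apply Summable.mul_left
    simp only [norm_mul, norm_pow]
    exact (summable_geometric_of_lt_one (norm_nonneg q) hq).mul_left _
  · filter_upwards [htend.eventually_lt_const (by norm_num : (0:ℝ) < 1/2)] with l hl
    have h12 : ‖-(z * q ^ l)‖ ≤ 1/2 := by rw [norm_neg]; exact hl.le
    calc ‖Complex.log (1 - z * q ^ l)‖
        = ‖Complex.log (1 + -(z * q ^ l))‖ := by rw [sub_eq_add_neg]
      _ ≤ 3/2 * ‖-(z * q ^ l)‖ := Complex.norm_log_one_add_half_le_self h12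
      _ = 3/2 * ‖z * q ^ l‖ := by rw [norm_neg]

theorem stmt3 (q z : ℂ) (hq : ‖q‖ < 1) :
    (∏' l : ℕ, (1 - z * q ^ l)) =
      ∑' j : ℕ, (-1) ^ j * q ^ (j * (j - 1) / 2) * z ^ j / qPoch q q j := by
  have hr0 : (0:ℝ) ≤ ‖q‖ := norm_nonneg q
  have hfacQ : ∀ i : ℕ, (1:ℂ) - q * q ^ i ≠ 0 := by
    intro i h
    have h1 : (1:ℂ) = q * q ^ i := (sub_eq_zero.mp h)
    have h2 : ‖q * q ^ i‖ ≤ ‖q‖ := by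
      rw [norm_mul, norm_pow]
      calc ‖q‖ * ‖q‖ ^ i ≤ ‖q‖ * 1 := by
            apply mul_le_mul_of_nonneg_left _ hr0
            exact pow_le_one₀ hr0 hq.le
        _ = ‖q‖ := mul_one _
    rw [← h1, norm_one] at h2
    linarith
  have hQne : ∀ n, qPoch q q n ≠ 0 :=
    fun n => Finset.prod_ne_zero_iff.mpr fun i _ => hfacQ i
  set δ := Real.exp (-(‖q‖ / ((1 - ‖q‖) * (1 - ‖q‖)))) with hδ
  set B := Real.exp (‖q‖ / (1 - ‖q‖)) with hB
  have hδpos : 0 < δ := Real.exp_pos _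
  have hBpos : 0 < B := Real.exp_pos _
  have hQmult : Multipliable (fun l : ℕ => 1 - q * q ^ l) :=
    multipliable_aux q q hq hfacQ
  set QI := ∏' l : ℕ, (1 - q * q ^ l) with hQI
  have hQtend : Tendsto (fun n => qPoch q q n) atTop (𝓝 QI) :=
    hQmult.hasProd.tendsto_prod_nat
  have hQIlb : δ ≤ ‖QI‖ :=
    ge_of_tendsto hQtend.norm (Eventually.of_forall (le_norm_qPoch q hq))
  have hQIne : QI ≠ 0 := by
    intro h; rw [h, norm_zero] at hQIlb; linarith
  set t : ℕ → ℂ := fun j => (-1) ^ j * q ^ (j * (j - 1) / 2) * z ^ j with htt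
  set f : ℕ → ℕ → ℂ := fun n j => t j * qb q n j with hf
  set c : ℕ → ℂ := fun j => t j / qPoch q q j with hc
  have hnormt : ∀ j, ‖t j‖ = ‖q‖ ^ (j * (j - 1) / 2) * ‖z‖ ^ j := by
    intro j
    rw [htt]
    simp [norm_mul, norm_pow]
  set g : ℕ → ℝ := fun j => B / (δ * δ) * (‖q‖ ^ (j * (j - 1) / 2) * ‖z‖ ^ j) with hg
  have hgnn : ∀ j, 0 ≤ g j := fun j => by positivity
  have hgsucc : ∀ j, g (j + 1) = g j * (‖q‖ ^ j * ‖z‖) := by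
    intro j
    rw [hg]
    simp only
    rw [show (j + 1) * (j + 1 - 1) / 2 = j * (j - 1) / 2 + j by
      simpa using half_sq j]
    rw [pow_add, pow_succ]
    ring
  have hgsum : Summable g := by
    apply summable_of_ratio_norm_eventually_le (r := 1/2) (by norm_num)
    have htend : Tendsto (fun j : ℕ => ‖q‖ ^ j * ‖z‖) atTop (𝓝 0) := by
      rw [show (0:ℝ) = 0 * ‖z‖ by ring]
      exact (tendsto_pow_atTop_nhds_zero_of_lt_one hr0 hq).mul_const _
    filter_upwards [htend.eventually_le_const (by norm_num : (0:ℝ) < 1/2)] with j hj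
    rw [Real.norm_of_nonneg (hgnn _), Real.norm_of_nonneg (hgnn _), hgsucc j]
    calc g j * (‖q‖ ^ j * ‖z‖) ≤ g j * (1/2) :=
          mul_le_mul_of_nonneg_left hj (hgnn j)
      _ = 1/2 * g j := by ring
  have h_bound : ∀ n j, ‖f n j‖ ≤ g j := by
    intro n j
    rcases le_or_gt j n with hjn | hjn
    · have hqb : qb q n j = qPoch q q n / (qPoch q q j * qPoch q q (n - j)) := by
        rw [eq_div_iff (mul_ne_zero (hQne j) (hQne (n - j)))]
        exact qb_mul q n j hjn
      rw [hf]
      simp only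
      rw [norm_mul, hnormt, hqb, norm_div, norm_mul]
      rw [hg]
      simp only
      rw [mul_comm (B / (δ * δ))]
      apply mul_le_mul_of_nonneg_left _ (by positivity)
      apply div_le_div₀ hBpos.le (norm_qPoch_le q hq n) (by positivity)
      exact mul_le_mul (le_norm_qPoch q hq j) (le_norm_qPoch q hq (n - j))
        hδpos.le (norm_nonneg _)
    · rw [hf]
      simp only
      rw [qb_of_lt q hjn, mul_zero, norm_zero]
      exact hgnn j
  have h_lim : ∀ j, Tendsto (fun n => f n j) atTop (𝓝 (c j)) := by
    intro j
    have h1 : Tendsto (fun n => qPoch q q (n - j)) atTop (𝓝 QI) :=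
      hQtend.comp (tendsto_sub_atTop_nat j)
    have h2 : Tendsto (fun n => t j * (qPoch q q n / (qPoch q q j * qPoch q q (n - j))))
        atTop (𝓝 (t j * (QI / (qPoch q q j * QI)))) :=
      tendsto_const_nhds.mul (hQtend.div (tendsto_const_nhds.mul h1)
        (mul_ne_zero (hQne j) hQIne))
    have h3 : t j * (QI / (qPoch q q j * QI)) = c j := by
      rw [hc, mul_comm (qPoch q q j) QI, div_mul_eq_div_div, div_self hQIne,
        one_div, ← div_eq_mul_inv]
    rw [h3] at h2
    apply Tendsto.congr' _ h2
    filter_upwards [eventually_ge_atTop j] with n hn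
    rw [hf]
    simp only
    congr 1
    rw [eq_comm, eq_div_iff (mul_ne_zero (hQne j) (hQne (n - j)))]
    exact qb_mul q n j hn
  have main := tendsto_tsum_of_dominated_convergence hgsum h_lim
    (Eventually.of_forall fun n => h_bound n)
  have hts : ∀ n, (∑' j, f n j) = qPoch z q n := by
    intro n
    have hz : ∀ b ∉ Finset.range (n + 1), f n b = 0 := by
      intro j hj
      have hnj : n < j := by
        simp only [Finset.mem_range, not_lt] at hj
        omega
      simp only [hf]
      rw [qb_of_lt q hnj, mul_zero]
    rw [tsum_eq_sum hz, qPoch_eq_sum]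
  have hPlim : Tendsto (fun n => qPoch z q n) atTop (𝓝 (∑' j, c j)) := by
    apply Tendsto.congr (fun n => hts n) main
  have hMz : Multipliable (fun l : ℕ => 1 - z * q ^ l) := by
    by_cases hzero : ∀ l, (1:ℂ) - z * q ^ l ≠ 0
    · exact multipliable_aux z q hq hzero
    · push_neg at hzero
      obtain ⟨l, hl⟩ := hzero
      exact ⟨0, hasProd_zero_of_exists_eq_zero ⟨l, hl⟩⟩
  have hPtend : Tendsto (fun n => qPoch z q n) atTop (𝓝 (∏' l : ℕ, (1 - z * q ^ l))) :=
    hMz.hasProd.tendsto_prod_nat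
  have := tendsto_nhds_unique hPtend hPlim
  rw [this]
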